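/- For an n×n real symmetric matrix H that has at least one positive eigenvalue, the infimum of ‖Hw‖² / (2 wᵀHw) over all w with wᵀHw > 0 equals λ_min/2, where λ_min is the smallest positive eigenvalue of H; moreover, the infimum is attained. -/

import Mathlib

open Filter Topology

noncomputable section

abbrev En (n : ℕ) := EuclideanSpace ℝ (Fin n)

/-- for a real symmetric matrix `H` with smallest positive
eigenvalue `λ_min`, the infimum of `‖Hw‖²/(2 wᵀHw)` over `{w : wᵀHw > 0}`
equals `λ_min/2` and is attained. -/
theorem statement_15 {n : ℕ} (H : Matrix (Fin n) (Fin n) ℝ) (hsymm : H.IsSymm)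
    (lammin : ℝ) (hlam0 : 0 < lammin)
    (heig : ∃ v : En n, v ≠ 0 ∧ (Matrix.toEuclideanCLM (𝕜 := ℝ) H) v = lammin • v)
    (hmin : ∀ μ : ℝ, 0 < μ → (∃ v : En n, v ≠ 0 ∧
        (Matrix.toEuclideanCLM (𝕜 := ℝ) H) v = μ • v) → lammin ≤ μ) :
    IsLeast {r : ℝ | ∃ w : En n,
        0 < (inner ℝ ((Matrix.toEuclideanCLM (𝕜 := ℝ) H) w) w : ℝ) ∧
        r = ‖(Matrix.toEuclideanCLM (𝕜 := ℝ) H) w‖ ^ 2 /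
          (2 * (inner ℝ ((Matrix.toEuclideanCLM (𝕜 := ℝ) H) w) w : ℝ))}
      (lammin / 2) := by
  set T := Matrix.toEuclideanCLM (𝕜 := ℝ) H with hT
  have hherm : H.IsHermitian := by
    rwa [Matrix.IsHermitian, Matrix.conjTranspose_eq_transpose_of_trivial]
  have hsym : (T : En n →ₗ[ℝ] En n).IsSymmetric := by
    rw [hT, Matrix.coe_toEuclideanCLM_eq_toEuclideanLin]
    exact Matrix.isHermitian_iff_isSymmetric.mp hherm
  constructor
  · obtain ⟨v, hv0, hveq⟩ := heig
    refine ⟨v, ?_, ?_⟩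
    · rw [hveq, real_inner_smul_left, real_inner_self_eq_norm_sq]
      have hvn : 0 < ‖v‖ := norm_pos_iff.mpr hv0
      positivity
    · rw [hveq, norm_smul, real_inner_smul_left, real_inner_self_eq_norm_sq]
      have hvn : ‖v‖ ≠ 0 := norm_ne_zero_iff.mpr hv0
      rw [Real.norm_eq_abs, abs_of_pos hlam0]
      field_simp
  · rintro r ⟨w, hw, rfl⟩
    have hfr : Module.finrank ℝ (En n) = n := finrank_euclideanSpace_fin
    set b := hsym.eigenvectorBasis hfr with hb
    set μ := hsym.eigenvalues hfr with hμ
    have heigv : ∀ i, T (b i) = μ i • b i := fun i =>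
      (hsym.hasEigenvector_eigenvectorBasis hfr i).apply_eq_smul
    set c : Fin n → ℝ := fun i => inner ℝ (b i) w with hc
    have hTwb : ∀ i, (inner ℝ (T w) (b i) : ℝ) = μ i * c i := by
      intro i
      have h1 : (inner ℝ (T (b i)) w : ℝ) = inner ℝ (b i) (T w) := hsym (b i) w
      rw [real_inner_comm, ← h1, heigv i, real_inner_smul_left]
    have hinner : (inner ℝ (T w) w : ℝ) = ∑ i, μ i * c i ^ 2 := by
      rw [← OrthonormalBasis.sum_inner_mul_inner b (T w) w]
      refine Finset.sum_congr rfl fun i _ => ?_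
      rw [hTwb i, hc]
      ring
    have hnorm : ‖T w‖ ^ 2 = ∑ i, (μ i * c i) ^ 2 := by
      rw [← real_inner_self_eq_norm_sq, ← OrthonormalBasis.sum_inner_mul_inner b (T w) (T w)]
      refine Finset.sum_congr rfl fun i _ => ?_
      have h2 : (inner ℝ (b i) (T w) : ℝ) = μ i * c i := (real_inner_comm _ _).trans (hTwb i)
      simp only [hTwb i, h2]
      ring
    have hterm : ∀ i ∈ Finset.univ, lammin * (μ i * c i ^ 2) ≤ (μ i * c i) ^ 2 := by
      intro i _
      rcases le_or_gt (μ i) 0 with h | h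
      · nlinarith [sq_nonneg (c i), sq_nonneg (μ i * c i), mul_nonpos_of_nonpos_of_nonneg h (sq_nonneg (c i))]
      · have hbne : b i ≠ 0 := by
          simpa [hb] using (hsym.eigenvectorBasis hfr).toBasis.ne_zero i
        have hle : lammin ≤ μ i := hmin (μ i) h ⟨b i, hbne, heigv i⟩
        nlinarith [sq_nonneg (c i), mul_nonneg h.le (sq_nonneg (c i))]
    have hkey : lammin * (inner ℝ (T w) w : ℝ) ≤ ‖T w‖ ^ 2 := by
      rw [hinner, hnorm, Finset.mul_sum]
      exact Finset.sum_le_sum hterm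
    rw [div_le_div_iff₀ (by norm_num) (by positivity)]
    nlinarith [hkey]
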